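/- Let G be an inner product on the three-dimensional Heisenberg Lie algebra 𝔤. Then Rc_G − 3R_G · Id is a derivation of 𝔤, i.e. δ(Rc_G − 3R_G·Id) = 0. -/

import Mathlib

open Matrix

namespace RFN

variable {n : ℕ}

/-- Bracket determined by structure constants: `[e i, e j] = ∑ k, c i j k • e k`. -/
def bra (c : Fin n → Fin n → Fin n → ℝ) (x y : Fin n → ℝ) : Fin n → ℝ :=
  fun k => ∑ i, ∑ j, x i * y j * c i j k

/-- `c` is a family of structure constants of a Lie algebra. -/
def IsLieSC (c : Fin n → Fin n → Fin n → ℝ) : Prop :=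
  (∀ i j k, c i j k = - c j i k) ∧
  ∀ x y z, bra c (bra c x y) z + bra c (bra c y z) x + bra c (bra c z x) y = 0

def adIter (c : Fin n → Fin n → Fin n → ℝ) (v : ℕ → Fin n → ℝ) :
    ℕ → (Fin n → ℝ) → (Fin n → ℝ)
  | 0, x => x
  | m + 1, x => bra c (v m) (adIter c v m x)

/-- Nilpotency of the Lie algebra with structure constants `c`. -/
def IsNilpotentSC (c : Fin n → Fin n → Fin n → ℝ) : Prop :=
  ∃ N : ℕ, ∀ v x, adIter c v N x = 0

/-- Inner product of vectors with respect to the metric matrix `G`. -/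
def gdot (G : Matrix (Fin n) (Fin n) ℝ) (x y : Fin n → ℝ) : ℝ :=
  ∑ i, ∑ j, x i * G i j * y j

/-- Components of the Ricci bilinear form of the invariant metric `G`:
`Ric_G(x,y) = -(1/2) Σ G([x,e_i],[y,e_j])G^{ij} + (1/4) Σ G^{ip}G^{jq}G([e_i,e_j],x)G([e_p,e_q],y)`. -/
noncomputable def Ricm (c : Fin n → Fin n → Fin n → ℝ) (G : Matrix (Fin n) (Fin n) ℝ) :
    Matrix (Fin n) (Fin n) ℝ :=
  Matrix.of fun a b =>
    -(1/2) * (∑ i, ∑ j, G⁻¹ i j * gdot G (c a i) (c b j))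
    + (1/4) * (∑ i, ∑ j, ∑ p, ∑ q, G⁻¹ i p * G⁻¹ j q *
        (∑ k, c i j k * G k a) * (∑ l, c p q l * G l b))

/-- Scalar curvature `R_G = -(1/4)|[·,·]|²_G`. -/
noncomputable def scalR (c : Fin n → Fin n → Fin n → ℝ) (G : Matrix (Fin n) (Fin n) ℝ) : ℝ :=
  -(1/4) * (∑ i, ∑ j, ∑ p, ∑ q, G⁻¹ i p * G⁻¹ j q * gdot G (c i j) (c p q))

/-- Ricci endomorphism `Rc_G = G⁻¹ Ric_G`. -/
noncomputable def Rc (c : Fin n → Fin n → Fin n → ℝ) (G : Matrix (Fin n) (Fin n) ℝ) :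
    Matrix (Fin n) (Fin n) ℝ := G⁻¹ * Ricm c G

/-- `δ(A)(e_i,e_j) = A[e_i,e_j] - [A e_i, e_j] - [e_i, A e_j]` (components). -/
def deltaE (c : Fin n → Fin n → Fin n → ℝ) (A : Matrix (Fin n) (Fin n) ℝ) :
    Fin n → Fin n → Fin n → ℝ :=
  fun i j k => (∑ l, A k l * c i j l) - (∑ l, A l i * c l j k) - (∑ l, A l j * c i l k)

/-- The inner product on `Λ²𝔤*⊗𝔤` induced by `G` (full sum over ordered pairs). -/
noncomputable def tinner (G : Matrix (Fin n) (Fin n) ℝ) (μ ν : Fin n → Fin n → Fin n → ℝ) : ℝ :=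
  ∑ i, ∑ j, ∑ p, ∑ q, G⁻¹ i p * G⁻¹ j q * gdot G (μ i j) (ν p q)

/-- The (Hilbert–Schmidt) inner product of endomorphisms induced by `G`. -/
noncomputable def einner (G : Matrix (Fin n) (Fin n) ℝ) (A B : Matrix (Fin n) (Fin n) ℝ) : ℝ :=
  ∑ i, ∑ j, G⁻¹ i j * gdot G (fun k => A k i) (fun k => B k j)

/-- The inner product of bilinear forms induced by `G`. -/
noncomputable def binner (G : Matrix (Fin n) (Fin n) ℝ) (S T : Matrix (Fin n) (Fin n) ℝ) : ℝ :=
  ∑ i, ∑ j, ∑ p, ∑ q, G⁻¹ i p * G⁻¹ j q * S i j * T p q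

/-- `|Ric_G|²`. -/
noncomputable def ric2 (c : Fin n → Fin n → Fin n → ℝ) (G : Matrix (Fin n) (Fin n) ℝ) : ℝ :=
  binner G (Ricm c G) (Ricm c G)

/-- The functional `W₊(G,τ) = τ R_G + τ² |Ric_G|²`. -/
noncomputable def Wplus (c : Fin n → Fin n → Fin n → ℝ) (G : Matrix (Fin n) (Fin n) ℝ) (τ : ℝ) : ℝ :=
  τ * scalR c G + τ ^ 2 * ric2 c G

/-- Structure constants of the 3-dimensional Heisenberg Lie algebra: `[e₀,e₁] = e₂`, `e₂` central. -/
def heis : Fin 3 → Fin 3 → Fin 3 → ℝ := fun i j k =>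
  if i = 0 ∧ j = 1 ∧ k = 2 then 1 else if i = 1 ∧ j = 0 ∧ k = 2 then -1 else 0

end RFN

open RFN Matrix

noncomputable def ricM (G : Matrix (Fin 3) (Fin 3) ℝ) : Matrix (Fin 3) (Fin 3) ℝ :=
  let H := G⁻¹; let g := G 2 2; let D := H 0 0 * H 1 1 - H 0 1 * H 1 0
  !![ -(1/2)*H 1 1*g + (1/2)*D*G 2 0*G 2 0, (1/2)*H 1 0*g + (1/2)*D*G 2 0*G 2 1, (1/2)*D*G 2 0*G 2 2;
      (1/2)*H 0 1*g + (1/2)*D*G 2 1*G 2 0, -(1/2)*H 0 0*g + (1/2)*D*G 2 1*G 2 1, (1/2)*D*G 2 1*G 2 2;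
      (1/2)*D*G 2 2*G 2 0, (1/2)*D*G 2 2*G 2 1, (1/2)*D*G 2 2*G 2 2]

set_option maxHeartbeats 2000000 in
lemma ric_eq (G : Matrix (Fin 3) (Fin 3) ℝ) : Ricm heis G = ricM G := by
  ext i j
  fin_cases i <;> fin_cases j <;>
    (simp [Ricm, ricM, gdot, heis, Fin.sum_univ_three]; ring)

set_option maxHeartbeats 2000000 in
lemma scalR_eq (G : Matrix (Fin 3) (Fin 3) ℝ) :
    scalR heis G = -(1/2) * (G⁻¹ 0 0 * G⁻¹ 1 1 - G⁻¹ 0 1 * G⁻¹ 1 0) * G 2 2 := by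
  simp [scalR, gdot, heis, Fin.sum_univ_three]
  ring

set_option maxHeartbeats 8000000 in

theorem stmt9 (G : Matrix (Fin 3) (Fin 3) ℝ) (hG : G.PosDef) :
    deltaE heis (Rc heis G - (3 * scalR heis G) • (1 : Matrix (Fin 3) (Fin 3) ℝ)) = 0 := by
  have hd : G.det ≠ 0 := hG.det_pos.ne'
  have hs := hG.1
  have hHs : (G⁻¹).IsHermitian := hs.inv
  have h10 : G 1 0 = G 0 1 := by have := congrFun (congrFun hs 1) 0; simpa using this.symm
  have h20 : G 2 0 = G 0 2 := by have := congrFun (congrFun hs 2) 0; simpa using this.symm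
  have h21 : G 2 1 = G 1 2 := by have := congrFun (congrFun hs 2) 1; simpa using this.symm
  have s10 : G⁻¹ 1 0 = G⁻¹ 0 1 := by have := congrFun (congrFun hHs 1) 0; simpa using this.symm
  have s20 : G⁻¹ 2 0 = G⁻¹ 0 2 := by have := congrFun (congrFun hHs 2) 0; simpa using this.symm
  have s21 : G⁻¹ 2 1 = G⁻¹ 1 2 := by have := congrFun (congrFun hHs 2) 1; simpa using this.symm
  have hinv : G⁻¹ * G = 1 := Matrix.nonsing_inv_mul G (isUnit_iff_ne_zero.mpr hd)
  have e02 : G⁻¹ 0 0 * G 0 2 + G⁻¹ 0 1 * G 1 2 + G⁻¹ 0 2 * G 2 2 = 0 := by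
    have := congrFun (congrFun hinv 0) 2
    simpa [Matrix.mul_apply, Fin.sum_univ_three, Matrix.one_apply] using this
  have e12 : G⁻¹ 0 1 * G 0 2 + G⁻¹ 1 1 * G 1 2 + G⁻¹ 1 2 * G 2 2 = 0 := by
    have := congrFun (congrFun hinv 1) 2
    simpa [Matrix.mul_apply, Fin.sum_univ_three, Matrix.one_apply, s10] using this
  have e22 : G⁻¹ 0 2 * G 0 2 + G⁻¹ 1 2 * G 1 2 + G⁻¹ 2 2 * G 2 2 = 1 := by
    have := congrFun (congrFun hinv 2) 2
    simpa [Matrix.mul_apply, Fin.sum_univ_three, Matrix.one_apply, s20, s21] using this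
  have hB : ∃ u v, Rc heis G = !![scalR heis G, 0, 0; 0, scalR heis G, 0; u, v, -scalR heis G] := by
    refine ⟨Rc heis G 2 0, Rc heis G 2 1, ?_⟩
    ext a b
    fin_cases a <;> fin_cases b <;>
      simp [Rc, ric_eq, ricM, scalR_eq, Matrix.mul_apply, Fin.sum_univ_three, s10, s20, s21,
        h10, h20, h21]
    · linear_combination (1/2 * (G⁻¹ 0 0 * G⁻¹ 1 1 - G⁻¹ 0 1 * G⁻¹ 0 1) * G 0 2) * e02
    · linear_combination (1/2 * (G⁻¹ 0 0 * G⁻¹ 1 1 - G⁻¹ 0 1 * G⁻¹ 0 1) * G 1 2) * e02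
    · linear_combination (1/2 * (G⁻¹ 0 0 * G⁻¹ 1 1 - G⁻¹ 0 1 * G⁻¹ 0 1) * G 2 2) * e02
    · linear_combination (1/2 * (G⁻¹ 0 0 * G⁻¹ 1 1 - G⁻¹ 0 1 * G⁻¹ 0 1) * G 0 2) * e12
    · linear_combination (1/2 * (G⁻¹ 0 0 * G⁻¹ 1 1 - G⁻¹ 0 1 * G⁻¹ 0 1) * G 1 2) * e12
    · linear_combination (1/2 * (G⁻¹ 0 0 * G⁻¹ 1 1 - G⁻¹ 0 1 * G⁻¹ 0 1) * G 2 2) * e12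
    · linear_combination (1/2 * (G⁻¹ 0 0 * G⁻¹ 1 1 - G⁻¹ 0 1 * G⁻¹ 0 1) * G 2 2) * e22
  obtain ⟨u, v, hB⟩ := hB
  funext i j k
  fin_cases i <;> fin_cases j <;> fin_cases k <;>
    simp [deltaE, hB, heis, Fin.sum_univ_three, Matrix.sub_apply, Matrix.smul_apply,
      Matrix.one_apply] <;> ring
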